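/- Fix n ≥ 2 and nonzero real numbers x_1 < x_2 < … < x_{2n−3}. Then for every signal x ∈ ℂⁿ, the matrix xx* is the unique positive semidefinite Hermitian n×n matrix Y satisfying ⟨e_i, Y e_i⟩ = |⟨e_i, x⟩|² for all i ∈ {0,…,n−1}, ⟨v_k, Y v_k⟩ = |⟨v_k, x⟩|² and ⟨v̄_k, Y v̄_k⟩ = |⟨v̄_k, x⟩|² for all k ∈ {1,…,2n−3}. In particular, x can be recovered up to a global phase from these 5n−6 intensity measurements, and xx* is the unique minimizer of tr(Y) over this (one-point) feasible set. -/

import Mathlib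

open Matrix
open scoped ComplexOrder
open Polynomial
open scoped ComplexConjugate

noncomputable section

/-- The vector `v = (1, x e^{iπ/(2n)}, x² e^{2iπ/(2n)}, …, x^{n−1} e^{(n−1)iπ/(2n)})ᵗ ∈ ℂⁿ`. -/
noncomputable def pvec (n : ℕ) (x : ℝ) : Fin n → ℂ := fun j =>
  (x : ℂ) ^ (j : ℕ) *
    Complex.exp (((j : ℕ) : ℂ) * (Real.pi : ℂ) * Complex.I / (2 * (n : ℂ)))


namespace Stmt3Aux

/-- `e^{dπi/(2n)}` for `d : ℤ`. -/
def ee (n : ℕ) (d : ℤ) : ℂ :=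
  Complex.exp ((d : ℂ) * (Real.pi : ℂ) * Complex.I / (2 * (n : ℂ)))

lemma ee_add (n : ℕ) (a b : ℤ) : ee n (a + b) = ee n a * ee n b := by
  rw [ee, ee, ee, ← Complex.exp_add]
  congr 1
  push_cast
  ring

lemma ee_zero (n : ℕ) : ee n 0 = 1 := by
  simp [ee]

lemma ee_conj (n : ℕ) (d : ℤ) : conj (ee n d) = ee n (-d) := by
  rw [ee, ee, ← Complex.exp_conj]
  congr 1
  simp only [map_div₀, _root_.map_mul, Complex.conj_I, map_ofNat, Complex.conj_ofReal,
    map_intCast, map_natCast]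
  push_cast
  ring

lemma ee_ne_zero (n : ℕ) (d : ℤ) : ee n d ≠ 0 := Complex.exp_ne_zero _

lemma ee_mul_ee_neg (n : ℕ) (d : ℤ) : ee n d * ee n (-d) = 1 := by
  rw [← ee_add]; simp [ee_zero]

lemma pvec_eq (n : ℕ) (t : ℝ) (j : Fin n) :
    pvec n t j = (t : ℂ) ^ (j : ℕ) * ee n ((j : ℕ) : ℤ) := by
  simp [pvec, ee]

lemma pvec_conj (n : ℕ) (t : ℝ) (j : Fin n) :
    conj (pvec n t j) = (t : ℂ) ^ (j : ℕ) * ee n (-((j : ℕ) : ℤ)) := by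
  rw [pvec_eq, _root_.map_mul, ← ee_conj]
  congr 1
  rw [← Complex.ofReal_pow]
  exact Complex.conj_ofReal _

/-- nonvanishing of `ee n (4d)` for `0 < d < n`. -/
lemma ee_four_ne_one (n : ℕ) (hn : 0 < n) (d : ℤ) (hd0 : 0 < d) (hdn : d < n) :
    ee n (4 * d) ≠ 1 := by
  rw [ee]
  intro h1
  rw [Complex.exp_eq_one_iff] at h1
  obtain ⟨k, hk⟩ := h1
  have hπ : (Real.pi : ℂ) ≠ 0 := by
    exact_mod_cast Real.pi_ne_zero
  have hI : Complex.I ≠ 0 := Complex.I_ne_zero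
  have hn' : ((n : ℂ)) ≠ 0 := by exact_mod_cast hn.ne'
  have key : ((4 * d : ℤ) : ℂ) = ((4 * k * n : ℤ) : ℂ) := by
    field_simp at hk
    push_cast
    have h2 : ((4:ℂ) * d) * (Real.pi * Complex.I) = (4 * k * n) * (Real.pi * Complex.I) := by
      ring_nf
      ring_nf at hk
      push_cast at hk
      linear_combination (↑Real.pi * Complex.I) * hk
    exact mul_right_cancel₀ (by simp [hπ, hI]) h2
  have key2 : 4 * d = 4 * k * n := by exact_mod_cast key
  have hdn' : d = k * n := by linarith
  rcases le_or_gt k 0 with hk0 | hk0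
  · have : k * (n:ℤ) ≤ 0 := mul_nonpos_of_nonpos_of_nonneg hk0 (by positivity)
    omega
  · have h1k : (1:ℤ) ≤ k := hk0
    have : (n:ℤ) ≤ k * n := le_mul_of_one_le_left (by positivity) h1k
    omega


variable {n : ℕ}

lemma quad_sum (M : Matrix (Fin n) (Fin n) ℂ) (v : Fin n → ℂ) :
    star v ⬝ᵥ M.mulVec v = ∑ j, ∑ l, conj (v j) * M j l * v l := by
  simp only [dotProduct, mulVec, Pi.star_apply, Complex.star_def, Finset.mul_sum]
  exact Finset.sum_congr rfl fun j _ => Finset.sum_congr rfl fun l _ => by ring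

lemma rankone_form (x v : Fin n → ℂ) :
    star v ⬝ᵥ (vecMulVec x (star x)).mulVec v
      = (star v ⬝ᵥ x) * conj (star v ⬝ᵥ x) := by
  rw [quad_sum]
  have h1 : star v ⬝ᵥ x = ∑ j, conj (v j) * x j := by
    simp [dotProduct]
  have h2 : conj (star v ⬝ᵥ x) = ∑ l, conj (x l) * v l := by
    rw [h1, map_sum]
    exact Finset.sum_congr rfl fun l _ => by simp; ring
  rw [h2, h1, Finset.sum_mul_sum]
  exact Finset.sum_congr rfl fun j _ => Finset.sum_congr rfl fun l _ => by
    simp [vecMulVec]; ring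

/-- Core coefficient-extraction lemma: a family of vanishing "polynomial" sums at
`2n-3` distinct nonzero points forces each antidiagonal sum to vanish. -/
lemma antidiag_vanish (hn : 2 ≤ n) (t : Fin (2 * n - 3) → ℝ)
    (ht0 : ∀ k, t k ≠ 0) (htinj : Function.Injective t)
    (A : Matrix (Fin n) (Fin n) ℂ) (hdiag : ∀ i, A i i = 0)
    (hvan : ∀ k, (∑ j : Fin n, ∑ l : Fin n, A j l * ((t k : ℂ)) ^ ((j : ℕ) + (l : ℕ))) = 0) :
    ∀ m : ℕ, (∑ j : Fin n, ∑ l : Fin n, if (j : ℕ) + (l : ℕ) = m then A j l else 0) = 0 := by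
  set P : Polynomial ℂ := ∑ j : Fin n, ∑ l : Fin n, C (A j l) * X ^ ((j : ℕ) + (l : ℕ)) with hP
  have hcoeff : ∀ m : ℕ, P.coeff m = ∑ j : Fin n, ∑ l : Fin n, if (j : ℕ) + (l : ℕ) = m then A j l else 0 := by
    intro m
    rw [hP, finset_sum_coeff]
    refine Finset.sum_congr rfl fun j _ => ?_
    rw [finset_sum_coeff]
    refine Finset.sum_congr rfl fun l _ => ?_
    rw [coeff_C_mul, coeff_X_pow]
    by_cases h : (j : ℕ) + (l : ℕ) = m
    · simp [h]
    · simp [h, Ne.symm h]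
  have heval : ∀ s : ℂ, P.eval s = ∑ j, ∑ l, A j l * s ^ ((j : ℕ) + (l : ℕ)) := by
    intro s
    rw [hP, eval_finset_sum]
    refine Finset.sum_congr rfl fun j _ => ?_
    rw [eval_finset_sum]
    refine Finset.sum_congr rfl fun l _ => by simp
  have hdeg : P.natDegree ≤ 2 * n - 3 := by
    rw [natDegree_le_iff_coeff_eq_zero]
    intro N hN
    rw [hcoeff]
    refine Finset.sum_eq_zero fun j _ => Finset.sum_eq_zero fun l _ => ?_
    by_cases h : (j : ℕ) + (l : ℕ) = N
    · have hj := j.isLt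
      have hl := l.isLt
      have : (j : ℕ) = (l : ℕ) := by omega
      have : j = l := Fin.ext this
      simp [h, this, hdiag]
    · simp [h]
  have hc0 : P.coeff 0 = 0 := by
    rw [hcoeff]
    refine Finset.sum_eq_zero fun j _ => Finset.sum_eq_zero fun l _ => ?_
    by_cases h : (j : ℕ) + (l : ℕ) = 0
    · have : (j : ℕ) = (l : ℕ) := by omega
      have : j = l := Fin.ext this
      simp [h, this, hdiag]
    · rw [if_neg h]
  have hPzero : P = 0 := by
    by_contra hPne
    obtain ⟨Q, hQ⟩ := X_dvd_iff.2 hc0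
    have hQne : Q ≠ 0 := by rintro rfl; simp at hQ; exact hPne hQ
    have hdegP : P.natDegree = 1 + Q.natDegree := by
      rw [hQ, natDegree_mul X_ne_zero hQne, natDegree_X]
    have hdegQ : Q.natDegree < 2 * n - 3 := by omega
    have hQeval : ∀ k, Q.eval ((t k : ℝ) : ℂ) = 0 := by
      intro k
      have h1 : P.eval ((t k : ℝ) : ℂ) = 0 := by rw [heval]; exact hvan k
      rw [hQ] at h1
      simp only [eval_mul, eval_X] at h1
      rcases mul_eq_zero.1 h1 with h | h
      · exact absurd (by exact_mod_cast h) (ht0 k)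
      · exact h
    have : Q = 0 := by
      refine Polynomial.eq_zero_of_natDegree_lt_card_of_eval_eq_zero Q
        (f := fun k : Fin (2 * n - 3) => ((t k : ℝ) : ℂ)) ?_ hQeval ?_
      · exact fun a b hab => htinj (Complex.ofReal_injective (by simpa using hab))
      · simpa using hdegQ
    exact hQne this
  intro m
  rw [← hcoeff, hPzero, coeff_zero]


lemma double_delta (c : ℂ) (j l : Fin n) :
    (∑ a : Fin n, ∑ b : Fin n, if a = j ∧ b = l then c else 0) = c := by
  rw [Finset.sum_eq_single j]
  · rw [Finset.sum_eq_single l]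
    · simp
    · intro b _ hb; simp [hb]
    · intro h; exact absurd (Finset.mem_univ l) h
  · intro a _ ha; exact Finset.sum_eq_zero fun b _ => by simp [ha]
  · intro h; exact absurd (Finset.mem_univ j) h

/-- collapse a double sum that vanishes except at `(j,l)` and `(l,j)`. -/
lemma sum_collapse (g : Fin n → Fin n → ℂ) (j l : Fin n) (hjl : j ≠ l)
    (hg : ∀ a b, ¬(a = j ∧ b = l) → ¬(a = l ∧ b = j) → g a b = 0) :
    (∑ a : Fin n, ∑ b : Fin n, g a b) = g j l + g l j := by
  have hrw : ∀ a b : Fin n, g a b =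
      (if a = j ∧ b = l then g j l else 0) + (if a = l ∧ b = j then g l j else 0) := by
    intro a b
    by_cases h1 : a = j ∧ b = l
    · obtain ⟨rfl, rfl⟩ := h1
      rw [if_pos ⟨rfl, rfl⟩, if_neg (fun hc => hjl hc.1), add_zero]
    · by_cases h2 : a = l ∧ b = j
      · obtain ⟨rfl, rfl⟩ := h2
        rw [if_neg (fun hc => hjl hc.2), if_pos ⟨rfl, rfl⟩, zero_add]
      · rw [if_neg h1, if_neg h2, add_zero]
        exact hg a b h1 h2
  calc (∑ a : Fin n, ∑ b : Fin n, g a b)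
      = ∑ a : Fin n, ∑ b : Fin n,
          ((if a = j ∧ b = l then g j l else 0) + (if a = l ∧ b = j then g l j else 0)) :=
        Finset.sum_congr rfl fun a _ => Finset.sum_congr rfl fun b _ => hrw a b
    _ = g j l + g l j := by
        rw [show (∑ a : Fin n, (∑ b : Fin n,
          ((if a = j ∧ b = l then g j l else 0) + (if a = l ∧ b = j then g l j else 0)))) =
          (∑ a : Fin n, ∑ b : Fin n, (if a = j ∧ b = l then g j l else 0))
          + (∑ a : Fin n, ∑ b : Fin n, (if a = l ∧ b = j then g l j else 0)) by
            rw [← Finset.sum_add_distrib]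
            exact Finset.sum_congr rfl fun a _ => Finset.sum_add_distrib]
        rw [double_delta, double_delta]

/-- Case A : if `(j,l)` is the only nonvanishing pair on the minimal antidiagonal,
the two ray conditions force the entry to vanish. -/
lemma only_pair (hn : 2 ≤ n) (Δ : Matrix (Fin n) (Fin n) ℂ)
    (hherm : ∀ a b, Δ b a = conj (Δ a b)) (hdiag : ∀ a, Δ a a = 0)
    (j l : Fin n) (hjl : (j : ℕ) < (l : ℕ)) (m₀ : ℕ) (hm : (j : ℕ) + (l : ℕ) = m₀)
    (huniq : ∀ p q : Fin n, (p : ℕ) + (q : ℕ) = m₀ → (p : ℕ) < (q : ℕ) → p ≠ j → Δ p q = 0)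
    (hSp : (∑ a : Fin n, ∑ b : Fin n,
      if (a : ℕ) + (b : ℕ) = m₀ then Δ a b * ee n (((b : ℕ) : ℤ) - ((a : ℕ) : ℤ)) else 0) = 0)
    (hSm : (∑ a : Fin n, ∑ b : Fin n,
      if (a : ℕ) + (b : ℕ) = m₀ then Δ a b * ee n (((a : ℕ) : ℤ) - ((b : ℕ) : ℤ)) else 0) = 0) :
    Δ j l = 0 := by
  have hjlne : j ≠ l := fun h => absurd (congrArg Fin.val h) hjl.ne
  have hentry : ∀ a b : Fin n, ¬(a = j ∧ b = l) → ¬(a = l ∧ b = j) →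
      ((a : ℕ) + (b : ℕ) = m₀) → Δ a b = 0 := by
    intro a b h1 h2 hab
    rcases lt_trichotomy (a : ℕ) (b : ℕ) with h | h | h
    · by_cases haj : a = j
      · subst haj
        have : (b : ℕ) = (l : ℕ) := by omega
        exact absurd ⟨rfl, Fin.ext this⟩ h1
      · exact huniq a b hab h haj
    · have : a = b := Fin.ext h
      subst this; exact hdiag a
    · rw [hherm b a]
      by_cases hbj : b = j
      · subst hbj
        have : (a : ℕ) = (l : ℕ) := by omega
        exact absurd ⟨Fin.ext this, rfl⟩ h2
      · rw [huniq b a (by omega) h hbj, map_zero]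
  set d : ℤ := ((l : ℕ) : ℤ) - ((j : ℕ) : ℤ) with hd
  have hd0 : 0 < d := by omega
  have hdn : d < n := by
    have := l.isLt; omega
  have hmd : ((j : ℕ) : ℤ) - ((l : ℕ) : ℤ) = -d := by omega
  rw [sum_collapse _ j l hjlne (by
    intro a b h1 h2
    by_cases hab : (a : ℕ) + (b : ℕ) = m₀
    · rw [if_pos hab, hentry a b h1 h2 hab, zero_mul]
    · rw [if_neg hab])] at hSp hSm
  rw [if_pos hm, if_pos (by omega), ← hd, hmd] at hSp hSm
  have E1 : Δ j l * ee n d + Δ l j * ee n (-d) = 0 := hSp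
  have E2 : Δ j l * ee n (-d) + Δ l j * ee n d = 0 := hSm
  have hu4 : ee n (4 * d) ≠ 1 := ee_four_ne_one n (by omega) d hd0 hdn
  have hu2 : ee n d * ee n d = ee n (2 * d) := by rw [← ee_add]; ring_nf
  have hu4' : ee n (2 * d) * ee n (2 * d) = ee n (4 * d) := by rw [← ee_add]; ring_nf
  have hinv : ee n d * ee n (-d) = 1 := ee_mul_ee_neg n d
  have h2ne1 : ee n (2 * d) ≠ 1 := fun h => hu4 (by rw [← hu4', h, one_mul])
  have h2nem1 : ee n (2 * d) ≠ -1 := fun h => hu4 (by rw [← hu4', h]; ring)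
  set z := Δ j l with hz
  have hlj : Δ l j = conj z := hherm j l
  rw [hlj] at E1 E2
  have F1 : z * ee n (2 * d) + conj z = 0 := by
    linear_combination (ee n d) * E1 + z * hu2.symm + (conj z) * hinv.symm
  have F2 : z + conj z * ee n (2 * d) = 0 := by
    linear_combination (ee n d) * E2 + (conj z) * hu2.symm + z * hinv.symm
  have hsub : (z - conj z) * (ee n (2 * d) - 1) = 0 := by linear_combination F1 - F2
  have hadd : (z + conj z) * (ee n (2 * d) + 1) = 0 := by linear_combination F1 + F2
  have hA : z - conj z = 0 := by
    rcases mul_eq_zero.1 hsub with h | h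
    · exact h
    · exact absurd (by linear_combination h) h2ne1
  have hB : z + conj z = 0 := by
    rcases mul_eq_zero.1 hadd with h | h
    · exact h
    · exact absurd (by linear_combination h) h2nem1
  linear_combination (1/2 : ℂ) * hA + (1/2 : ℂ) * hB


lemma star_single (i : Fin n) (u : ℂ) :
    star (Pi.single i u : Fin n → ℂ) = Pi.single i (conj u) := by
  rw [← Pi.single_star]
  rfl

lemma quad_expand (M : Matrix (Fin n) (Fin n) ℂ) (i₁ i₂ i₃ i₄ : Fin n) (u₁ u₂ u₃ u₄ : ℂ) :
    star (Pi.single i₁ u₁ + Pi.single i₂ u₂ + Pi.single i₃ u₃ + Pi.single i₄ u₄) ⬝ᵥ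
      M.mulVec (Pi.single i₁ u₁ + Pi.single i₂ u₂ + Pi.single i₃ u₃ + Pi.single i₄ u₄)
    = conj u₁ * M i₁ i₁ * u₁ + conj u₁ * M i₁ i₂ * u₂
      + conj u₁ * M i₁ i₃ * u₃ + conj u₁ * M i₁ i₄ * u₄
      + conj u₂ * M i₂ i₁ * u₁ + conj u₂ * M i₂ i₂ * u₂
      + conj u₂ * M i₂ i₃ * u₃ + conj u₂ * M i₂ i₄ * u₄
      + conj u₃ * M i₃ i₁ * u₁ + conj u₃ * M i₃ i₂ * u₂
      + conj u₃ * M i₃ i₃ * u₃ + conj u₃ * M i₃ i₄ * u₄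
      + conj u₄ * M i₄ i₁ * u₁ + conj u₄ * M i₄ i₂ * u₂
      + conj u₄ * M i₄ i₃ * u₃ + conj u₄ * M i₄ i₄ * u₄ := by
  simp only [star_add, star_single, Matrix.mulVec_add, Matrix.mulVec_single,
    dotProduct_add, add_dotProduct, single_dotProduct, Pi.smul_apply, op_smul_eq_mul,
    Matrix.col_apply]
  ring

lemma dot_expand (x : Fin n → ℂ) (i₁ i₂ i₃ i₄ : Fin n) (u₁ u₂ u₃ u₄ : ℂ) :
    star (Pi.single i₁ u₁ + Pi.single i₂ u₂ + Pi.single i₃ u₃ + Pi.single i₄ u₄) ⬝ᵥ x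
    = conj u₁ * x i₁ + conj u₂ * x i₂ + conj u₃ * x i₃ + conj u₄ * x i₄ := by
  simp only [star_add, star_single, add_dotProduct, single_dotProduct]


lemma arith_contra (ac₁ ac₂ A B μ C₀ r : ℝ) (m₀ : ℕ) (Gre : ℝ)
    (hposnc : 0 < ac₁ ^ 2 + ac₂ ^ 2)
    (hμA : μ ≤ A) (hμB : μ ≤ B) (hμpos : 0 < μ) (hr0 : 0 < r)
    (hCrμ : C₀ * r < 2 * μ) (hC₀ : 0 ≤ C₀)
    (hGre : Gre ≤ ac₁ * ac₂ * (r ^ (m₀ + 1) * C₀))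
    (h0re : 0 ≤ -(2 * (ac₁ ^ 2 * A * r ^ m₀ + ac₂ ^ 2 * B * r ^ m₀)) + (Gre + Gre)) :
    False := by
  have hrm : 0 < r ^ m₀ := pow_pos hr0 _
  have hsplit : r ^ (m₀ + 1) = r ^ m₀ * r := pow_succ r m₀
  have h2ab : 2 * (ac₁ * ac₂) ≤ ac₁ ^ 2 + ac₂ ^ 2 := by nlinarith [sq_nonneg (ac₁ - ac₂)]
  have hnn : 0 ≤ r ^ m₀ * (C₀ * r) := by positivity
  have hGre2 : Gre + Gre ≤ (ac₁ ^ 2 + ac₂ ^ 2) * (r ^ m₀ * (C₀ * r)) := by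
    have e1 : ac₁ * ac₂ * (r ^ (m₀ + 1) * C₀) = (ac₁ * ac₂) * (r ^ m₀ * (C₀ * r)) := by
      rw [hsplit]; ring
    rw [e1] at hGre
    have e2 : (ac₁ * ac₂) * (r ^ m₀ * (C₀ * r)) + (ac₁ * ac₂) * (r ^ m₀ * (C₀ * r))
        = (2 * (ac₁ * ac₂)) * (r ^ m₀ * (C₀ * r)) := by ring
    calc Gre + Gre ≤ (ac₁ * ac₂) * (r ^ m₀ * (C₀ * r)) + (ac₁ * ac₂) * (r ^ m₀ * (C₀ * r)) := by
          linarith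
      _ = (2 * (ac₁ * ac₂)) * (r ^ m₀ * (C₀ * r)) := e2
      _ ≤ (ac₁ ^ 2 + ac₂ ^ 2) * (r ^ m₀ * (C₀ * r)) := mul_le_mul_of_nonneg_right h2ab hnn
  have hA3 : (ac₁ ^ 2 + ac₂ ^ 2) * (μ * r ^ m₀) ≤ ac₁ ^ 2 * A * r ^ m₀ + ac₂ ^ 2 * B * r ^ m₀ := by
    nlinarith [mul_nonneg (mul_nonneg (sq_nonneg ac₁) hrm.le) (sub_nonneg.2 hμA),
      mul_nonneg (mul_nonneg (sq_nonneg ac₂) hrm.le) (sub_nonneg.2 hμB)]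
  have hlt : (ac₁ ^ 2 + ac₂ ^ 2) * (r ^ m₀ * (C₀ * r)) <
      (ac₁ ^ 2 + ac₂ ^ 2) * (r ^ m₀ * (2 * μ)) :=
    mul_lt_mul_of_pos_left (mul_lt_mul_of_pos_left hCrμ hrm) hposnc
  have heq : (ac₁ ^ 2 + ac₂ ^ 2) * (r ^ m₀ * (2 * μ))
      = 2 * ((ac₁ ^ 2 + ac₂ ^ 2) * (μ * r ^ m₀)) := by ring
  linarith

/-- Case B : two distinct nonzero pairs on the minimal antidiagonal contradict positivity. -/
lemma caseB (Y : Matrix (Fin n) (Fin n) ℂ) (x : Fin n → ℂ)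
    (hpsd : ∀ w : Fin n → ℂ, 0 ≤ star w ⬝ᵥ Y.mulVec w)
    (Δ : Matrix (Fin n) (Fin n) ℂ)
    (hsplit : ∀ w : Fin n → ℂ, star w ⬝ᵥ Y.mulVec w =
       (star w ⬝ᵥ x) * conj (star w ⬝ᵥ x) + star w ⬝ᵥ Δ.mulVec w)
    (hherm : ∀ a b, Δ b a = conj (Δ a b)) (hdiag : ∀ a, Δ a a = 0)
    (m₀ : ℕ) (hmin : ∀ a b : Fin n, (a : ℕ) + (b : ℕ) < m₀ → Δ a b = 0)
    (j p q l : Fin n) (hjp : (j : ℕ) < (p : ℕ)) (hpq : (p : ℕ) < (q : ℕ))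
    (hql : (q : ℕ) < (l : ℕ))
    (hjl : (j : ℕ) + (l : ℕ) = m₀) (hpqm : (p : ℕ) + (q : ℕ) = m₀)
    (hδ1 : Δ j l ≠ 0) (hδ2 : Δ p q ≠ 0) : False := by
  set δ₁ := Δ j l with hδ₁def
  set δ₂ := Δ p q with hδ₂def
  set ε₁ := Δ l p with hε₁def
  set ε₂ := Δ l q with hε₂def
  have hz1 : Δ j p = 0 := hmin _ _ (by omega)
  have hz2 : Δ p j = 0 := by rw [hherm j p, hz1, map_zero]
  have hz3 : Δ j q = 0 := hmin _ _ (by omega)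
  have hz4 : Δ q j = 0 := by rw [hherm j q, hz3, map_zero]
  have hlj : Δ l j = conj δ₁ := hherm j l
  have hqp : Δ q p = conj δ₂ := hherm p q
  have hpl : Δ p l = conj ε₁ := hherm l p
  have hql' : Δ q l = conj ε₂ := hherm l q
  clear_value δ₁ δ₂ ε₁ ε₂
  -- real quantities
  set A := Complex.normSq δ₁ with hA
  set B := Complex.normSq δ₂ with hB
  have hApos : 0 < A := Complex.normSq_pos.2 hδ1
  have hBpos : 0 < B := Complex.normSq_pos.2 hδ2
  set C₀ := ‖δ₁‖ * ‖ε₁‖ + ‖δ₁‖ * ‖ε₂‖ * ‖δ₂‖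
    with hC₀
  have hC₀nonneg : 0 ≤ C₀ := by positivity
  set μ := min A B with hμ
  have hμpos : 0 < μ := lt_min hApos hBpos
  have hμA : μ ≤ A := min_le_left _ _
  have hμB : μ ≤ B := min_le_right _ _
  set r := min 1 (μ / (C₀ + 1)) with hr
  have hr0 : 0 < r := lt_min one_pos (div_pos hμpos (by positivity))
  have hr1 : r ≤ 1 := min_le_left _ _
  have hCr : C₀ * r ≤ μ := by
    calc C₀ * r ≤ C₀ * (μ / (C₀ + 1)) :=
          mul_le_mul_of_nonneg_left (min_le_right _ _) hC₀nonneg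
      _ = μ * (C₀ / (C₀ + 1)) := by ring
      _ ≤ μ * 1 := by
          refine mul_le_mul_of_nonneg_left ?_ hμpos.le
          rw [div_le_one (by positivity)]
          linarith
      _ = μ := mul_one μ
  have hCrμ : C₀ * r < 2 * μ := lt_of_le_of_lt hCr (by linarith)
  clear_value A B C₀ μ r
  -- the four amplitudes
  set a₁ : ℂ := ((r ^ (j : ℕ) : ℝ) : ℂ) with ha₁
  set b₁ : ℂ := -((r ^ (l : ℕ) : ℝ) : ℂ) * conj δ₁ with hb₁
  set a₂ : ℂ := ((r ^ (p : ℕ) : ℝ) : ℂ) with ha₂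
  set b₂ : ℂ := -((r ^ (q : ℕ) : ℝ) : ℂ) * conj δ₂ with hb₂
  have habsb₁ : ‖b₁‖ = r ^ (l : ℕ) * ‖δ₁‖ := by
    rw [hb₁, norm_mul, norm_neg, Complex.norm_real, Real.norm_eq_abs, Complex.norm_conj,
      abs_of_nonneg (pow_nonneg hr0.le _)]
  have habsa₂ : ‖a₂‖ = r ^ (p : ℕ) := by
    rw [ha₂, Complex.norm_real, Real.norm_eq_abs, abs_of_nonneg (pow_nonneg hr0.le _)]
  have habsb₂ : ‖b₂‖ = r ^ (q : ℕ) * ‖δ₂‖ := by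
    rw [hb₂, norm_mul, norm_neg, Complex.norm_real, Real.norm_eq_abs, Complex.norm_conj,
      abs_of_nonneg (pow_nonneg hr0.le _)]
  set X₁ := conj a₁ * x j + conj b₁ * x l with hX₁
  set X₂ := conj a₂ * x p + conj b₂ * x q with hX₂
  obtain ⟨c₁, c₂, hcne, hcX⟩ :
      ∃ c₁ c₂ : ℂ, (0 < Complex.normSq c₁ + Complex.normSq c₂) ∧
        conj c₁ * X₁ + conj c₂ * X₂ = 0 := by
    by_cases hX : X₁ = 0 ∧ X₂ = 0
    · exact ⟨1, 1, by norm_num, by rw [hX.1, hX.2]; ring⟩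
    · refine ⟨conj X₂, -conj X₁, ?_, by simp only [_root_.map_neg, Complex.conj_conj]; ring⟩
      rcases not_and_or.1 hX with h | h
      · have h1 : 0 < Complex.normSq (-conj X₁) := by
          rw [Complex.normSq_pos]
          simpa using h
        have h2 : 0 ≤ Complex.normSq (conj X₂) := Complex.normSq_nonneg _
        linarith
      · have h1 : 0 < Complex.normSq (conj X₂) := by
          rw [Complex.normSq_pos]
          simpa using h
        have h2 : 0 ≤ Complex.normSq (-conj X₁) := Complex.normSq_nonneg _
        linarith
  set w : Fin n → ℂ := Pi.single j (c₁ * a₁) + Pi.single l (c₁ * b₁)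
    + Pi.single p (c₂ * a₂) + Pi.single q (c₂ * b₂) with hw
  -- the x-component of w vanishes
  have hdotx : star w ⬝ᵥ x = 0 := by
    rw [hw, dot_expand]
    rw [← hcX, hX₁, hX₂]
    simp only [_root_.map_mul]
    ring
  -- the Δ-form of w
  set G : ℂ := conj c₁ * c₂ * conj b₁ * (ε₁ * a₂ + ε₂ * b₂) with hG
  have hSval : star w ⬝ᵥ Δ.mulVec w
      = ((-(2 * (Complex.normSq c₁ * A * r ^ ((j : ℕ) + (l : ℕ))
            + Complex.normSq c₂ * B * r ^ ((p : ℕ) + (q : ℕ)))) : ℝ) : ℂ)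
        + (G + conj G) := by
    rw [hw, quad_expand]
    rw [hdiag j, hdiag l, hdiag p, hdiag q, hz1, hz2, hz3, hz4, hlj, hqp, hpl, hql',
      ← hδ₁def, ← hδ₂def, ← hε₁def, ← hε₂def]
    rw [hG, ha₁, hb₁, ha₂, hb₂, hA, hB]
    simp only [_root_.map_mul, _root_.map_neg, _root_.map_sub, _root_.map_add, map_pow,
      Complex.conj_conj, Complex.conj_ofReal]
    push_cast
    rw [← Complex.mul_conj δ₁, ← Complex.mul_conj δ₂, ← Complex.mul_conj c₁,
      ← Complex.mul_conj c₂]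
    ring
  -- positivity gives 0 ≤ re of the Δ-form
  have h0 : (0 : ℂ) ≤ star w ⬝ᵥ Δ.mulVec w := by
    have h := hpsd w
    rw [hsplit w, hdotx] at h
    simpa using h
  have h0re : 0 ≤ (star w ⬝ᵥ Δ.mulVec w).re := by
    rw [Complex.le_def] at h0
    simpa using h0.1
  rw [hSval] at h0re
  simp only [Complex.add_re, Complex.ofReal_re, Complex.conj_re] at h0re
  rw [hjl, hpqm] at h0re
  -- bound the cross term
  have hGabs : ‖G‖ ≤
      ‖c₁‖ * ‖c₂‖ *
        (r ^ ((l : ℕ) + (p : ℕ)) * (‖δ₁‖ * ‖ε₁‖)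
          + r ^ ((l : ℕ) + (q : ℕ)) * (‖δ₁‖ * ‖ε₂‖ * ‖δ₂‖)) := by
    rw [hG]
    calc ‖conj c₁ * c₂ * conj b₁ * (ε₁ * a₂ + ε₂ * b₂)‖
        = ‖c₁‖ * ‖c₂‖ * ‖b₁‖ * ‖(ε₁ * a₂ + ε₂ * b₂)‖ := by
          simp only [norm_mul, Complex.norm_conj]
      _ ≤ ‖c₁‖ * ‖c₂‖ * ‖b₁‖ *
            (‖ε₁‖ * ‖a₂‖ + ‖ε₂‖ * ‖b₂‖) := by
          refine mul_le_mul_of_nonneg_left ?_ (by positivity)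
          calc ‖(ε₁ * a₂ + ε₂ * b₂)‖
              ≤ ‖(ε₁ * a₂)‖ + ‖(ε₂ * b₂)‖ := norm_add_le _ _
            _ = ‖ε₁‖ * ‖a₂‖ + ‖ε₂‖ * ‖b₂‖ := by
                simp only [norm_mul]
      _ = ‖c₁‖ * ‖c₂‖ *
            (r ^ ((l : ℕ) + (p : ℕ)) * (‖δ₁‖ * ‖ε₁‖)
              + r ^ ((l : ℕ) + (q : ℕ)) * (‖δ₁‖ * ‖ε₂‖ * ‖δ₂‖)) := by
          rw [habsb₁, habsa₂, habsb₂, pow_add, pow_add]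
          ring
  have hpow1 : r ^ ((l : ℕ) + (p : ℕ)) ≤ r ^ (m₀ + 1) :=
    pow_le_pow_of_le_one hr0.le hr1 (by omega)
  have hpow2 : r ^ ((l : ℕ) + (q : ℕ)) ≤ r ^ (m₀ + 1) :=
    pow_le_pow_of_le_one hr0.le hr1 (by omega)
  have hGabs2 : ‖G‖ ≤ ‖c₁‖ * ‖c₂‖ * (r ^ (m₀ + 1) * C₀) := by
    refine hGabs.trans ?_
    refine mul_le_mul_of_nonneg_left ?_ (by positivity)
    rw [hC₀, mul_add]
    have k1 : 0 ≤ ‖δ₁‖ * ‖ε₁‖ := by positivity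
    have k2 : 0 ≤ ‖δ₁‖ * ‖ε₂‖ * ‖δ₂‖ := by positivity
    have e1 := mul_le_mul_of_nonneg_right hpow1 k1
    have e2 := mul_le_mul_of_nonneg_right hpow2 k2
    linarith
  have hGre : G.re ≤ ‖c₁‖ * ‖c₂‖ * (r ^ (m₀ + 1) * C₀) :=
    (Complex.re_le_norm G).trans hGabs2
  -- assemble the contradiction
  rw [← Complex.sq_norm c₁, ← Complex.sq_norm c₂] at h0re hcne
  exact arith_contra (‖c₁‖) (‖c₂‖) A B μ C₀ r m₀ G.re hcne hμA hμB hμpos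
    hr0 hCrμ hC₀nonneg hGre h0re

end Stmt3Aux

open Stmt3Aux

/-- for every signal `x ∈ ℂⁿ`, the matrix `xx*` is the unique PSD matrix `Y`
reproducing the intensities `⟨e_i, Y e_i⟩ = |⟨e_i, x⟩|²`, `⟨v_k, Y v_k⟩ = |⟨v_k, x⟩|²` and
`⟨v̄_k, Y v̄_k⟩ = |⟨v̄_k, x⟩|²`; in particular `x` is recovered up to a global phase. -/
theorem stmt3 {n : ℕ} (hn : 2 ≤ n) (t : Fin (2 * n - 3) → ℝ)
    (ht0 : ∀ k, t k ≠ 0) (htmono : StrictMono t) (x : Fin n → ℂ) :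
    ∀ Y : Matrix (Fin n) (Fin n) ℂ, Y.PosSemidef →
      (∀ i : Fin n, Y i i = (Complex.normSq (x i) : ℂ)) →
      (∀ k, star (pvec n (t k)) ⬝ᵥ Y.mulVec (pvec n (t k)) =
        (Complex.normSq (star (pvec n (t k)) ⬝ᵥ x) : ℂ)) →
      (∀ k, star (star (pvec n (t k))) ⬝ᵥ Y.mulVec (star (pvec n (t k))) =
        (Complex.normSq (star (star (pvec n (t k))) ⬝ᵥ x) : ℂ)) →
      Y = vecMulVec x (star x) := by
  classical
  intro Y hpsd hdiagm hm1 hm2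
  set Δ : Matrix (Fin n) (Fin n) ℂ := Y - vecMulVec x (star x) with hΔ
  have hherm : ∀ a b, Δ b a = conj (Δ a b) := by
    intro a b
    have h1 : Y b a = conj (Y a b) := by
      have h2 := hpsd.1.apply b a
      rw [Complex.star_def] at h2
      exact h2.symm
    rw [hΔ, Matrix.sub_apply, Matrix.sub_apply, vecMulVec_apply, vecMulVec_apply,
      map_sub, _root_.map_mul, h1]
    simp only [Pi.star_apply, Complex.star_def, Complex.conj_conj]
    ring
  have hdiagΔ : ∀ a, Δ a a = 0 := by
    intro a
    rw [hΔ, Matrix.sub_apply, vecMulVec_apply, hdiagm a]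
    simp only [Pi.star_apply, Complex.star_def]
    rw [Complex.mul_conj, sub_self]
  have expand : ∀ v : Fin n → ℂ, star v ⬝ᵥ Δ.mulVec v
      = star v ⬝ᵥ Y.mulVec v - (star v ⬝ᵥ x) * conj (star v ⬝ᵥ x) := by
    intro v
    rw [hΔ, Matrix.sub_mulVec, dotProduct_sub, rankone_form]
  have hterm1 : ∀ (s : ℝ) (j l : Fin n) (c : ℂ),
      conj (pvec n s j) * c * pvec n s l
        = (c * ee n (((l : ℕ) : ℤ) - ((j : ℕ) : ℤ))) * ((s : ℂ)) ^ ((j : ℕ) + (l : ℕ)) := by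
    intro s j l c
    rw [pvec_conj, pvec_eq, pow_add,
      show ((l : ℕ) : ℤ) - ((j : ℕ) : ℤ) = -((j : ℕ) : ℤ) + ((l : ℕ) : ℤ) by ring, ee_add]
    ring
  have hterm2 : ∀ (s : ℝ) (j l : Fin n) (c : ℂ),
      conj (conj (pvec n s j)) * c * conj (pvec n s l)
        = (c * ee n (((j : ℕ) : ℤ) - ((l : ℕ) : ℤ))) * ((s : ℂ)) ^ ((j : ℕ) + (l : ℕ)) := by
    intro s j l c
    rw [Complex.conj_conj, pvec_eq, pvec_conj, pow_add,
      show ((j : ℕ) : ℤ) - ((l : ℕ) : ℤ) = ((j : ℕ) : ℤ) + -((l : ℕ) : ℤ) by ring, ee_add]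
    ring
  have hA1 : ∀ m : ℕ, (∑ j : Fin n, ∑ l : Fin n,
      if (j : ℕ) + (l : ℕ) = m then Δ j l * ee n (((l : ℕ) : ℤ) - ((j : ℕ) : ℤ)) else 0) = 0 := by
    refine antidiag_vanish hn t ht0 htmono.injective
      (fun j l => Δ j l * ee n (((l : ℕ) : ℤ) - ((j : ℕ) : ℤ))) ?_ ?_
    · intro i
      simp only [sub_self, ee_zero, hdiagΔ i, zero_mul, mul_one]
    · intro k
      have h1 : star (pvec n (t k)) ⬝ᵥ Δ.mulVec (pvec n (t k)) = 0 := by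
        rw [expand, hm1 k, Complex.mul_conj, sub_self]
      rw [quad_sum] at h1
      rw [← h1]
      exact Finset.sum_congr rfl fun j _ => Finset.sum_congr rfl fun l _ =>
        (hterm1 (t k) j l (Δ j l)).symm
  have hA2 : ∀ m : ℕ, (∑ j : Fin n, ∑ l : Fin n,
      if (j : ℕ) + (l : ℕ) = m then Δ j l * ee n (((j : ℕ) : ℤ) - ((l : ℕ) : ℤ)) else 0) = 0 := by
    refine antidiag_vanish hn t ht0 htmono.injective
      (fun j l => Δ j l * ee n (((j : ℕ) : ℤ) - ((l : ℕ) : ℤ))) ?_ ?_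
    · intro i
      simp only [sub_self, ee_zero, hdiagΔ i, zero_mul, mul_one]
    · intro k
      have h1 : star (star (pvec n (t k))) ⬝ᵥ Δ.mulVec (star (pvec n (t k))) = 0 := by
        rw [expand, hm2 k, Complex.mul_conj, sub_self]
      rw [quad_sum] at h1
      rw [← h1]
      refine Finset.sum_congr rfl fun j _ => Finset.sum_congr rfl fun l _ => ?_
      have := (hterm2 (t k) j l (Δ j l)).symm
      simpa only [Pi.star_apply, Complex.star_def] using this
  by_contra hne
  have hΔne : ∃ a b, Δ a b ≠ 0 := by
    by_contra hall
    push_neg at hall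
    apply hne
    have hzero : Δ = 0 := by
      ext a b
      exact hall a b
    rw [hΔ] at hzero
    rw [sub_eq_zero] at hzero
    exact hzero
  obtain ⟨a0, b0, hab0⟩ := hΔne
  have hex : ∃ m : ℕ, ∃ a b : Fin n, (a : ℕ) + (b : ℕ) = m ∧ Δ a b ≠ 0 :=
    ⟨_, a0, b0, rfl, hab0⟩
  set m₀ := Nat.find hex with hm₀def
  obtain ⟨a, b, hab, habne⟩ := Nat.find_spec hex
  have hmin : ∀ c d : Fin n, (c : ℕ) + (d : ℕ) < m₀ → Δ c d = 0 := by
    intro c d hcd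
    by_contra hne2
    exact Nat.find_min hex hcd ⟨c, d, rfl, hne2⟩
  obtain ⟨j, l, hjl, hjlm, hjlne⟩ :
      ∃ j l : Fin n, (j : ℕ) < (l : ℕ) ∧ (j : ℕ) + (l : ℕ) = m₀ ∧ Δ j l ≠ 0 := by
    rcases lt_trichotomy (a : ℕ) (b : ℕ) with h | h | h
    · exact ⟨a, b, h, hab, habne⟩
    · rw [show a = b from Fin.ext h] at habne
      exact absurd (hdiagΔ b) habne
    · refine ⟨b, a, h, by omega, ?_⟩
      rw [hherm a b]
      simpa using habne
  have hsplit : ∀ w : Fin n → ℂ, star w ⬝ᵥ Y.mulVec w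
      = (star w ⬝ᵥ x) * conj (star w ⬝ᵥ x) + star w ⬝ᵥ Δ.mulVec w := by
    intro w
    rw [expand w]
    ring
  by_cases hsec : ∃ p q : Fin n,
      (p : ℕ) + (q : ℕ) = m₀ ∧ (p : ℕ) < (q : ℕ) ∧ p ≠ j ∧ Δ p q ≠ 0
  · obtain ⟨p, q, hpqm, hpq, hpj, hpqne⟩ := hsec
    have hvalne : (p : ℕ) ≠ (j : ℕ) := fun h => hpj (Fin.ext h)
    rcases lt_or_gt_of_ne hvalne with h | h
    · exact caseB Y x hpsd.dotProduct_mulVec_nonneg Δ hsplit hherm hdiagΔ m₀ hmin p j l q h hjl (by omega)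
        hpqm hjlm hpqne hjlne
    · exact caseB Y x hpsd.dotProduct_mulVec_nonneg Δ hsplit hherm hdiagΔ m₀ hmin j p q l h hpq (by omega)
        hjlm hpqm hjlne hpqne
  · push_neg at hsec
    exact hjlne (only_pair hn Δ hherm hdiagΔ j l hjl m₀ hjlm
      (fun p q h1 h2 h3 => hsec p q h1 h2 h3) (hA1 m₀) (hA2 m₀))
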